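/- Let X = (X, ρ) be a nonempty binary structure, I an infinite set with |I| less than the first measurable cardinal, and U a non-principal ultrafilter on I. Then the ultrapower ∏_U X is connected if and only if X has finite diameter. The implication from finite diameter to connectedness of the ultrapower holds in ZFC. -/
import Mathlib


/-- Reflexivization of a binary relation. -/
def rRefl {X : Type*} (ρ : X → X → Prop) : X → X → Prop := fun a b => ρ a b ∨ a = b

/-- Signed step: `ρ` for `false`, `ρ⁻¹` for `true` (after reflexivizing). -/
def rStep {X : Type*} (ρ : X → X → Prop) : Bool → X → X → Prop :=
  fun e a b => if e then rRefl ρ b a else rRefl ρ a b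

/-- `(z, ε)` is a path of length `n+1` from `x` to `y`. -/
def pathPts {X : Type*} {n : ℕ} (x y : X) (z : Fin n → X) : Fin (n + 2) → X :=
  Fin.cons x (Fin.snoc z y)

def IsPath {X : Type*} (ρ : X → X → Prop) {n : ℕ} (z : Fin n → X)
    (ε : Fin (n + 1) → Bool) (x y : X) : Prop :=
  ∀ k : Fin (n + 1), rStep ρ (ε k) (pathPts x y z k.castSucc) (pathPts x y z k.succ)

/-- There is a path of length `≤ n+1` from `x` to `y`. -/
def dLE {X : Type*} (ρ : X → X → Prop) (n : ℕ) (x y : X) : Prop :=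
  ∃ m, m ≤ n ∧ ∃ z : Fin m → X, ∃ ε : Fin (m + 1) → Bool, IsPath ρ z ε x y

/-- A binary structure is connected iff any two points are joined by a finite path. -/
def Conn {X : Type*} (ρ : X → X → Prop) : Prop := ∀ x y : X, ∃ n, dLE ρ n x y

/-- The setoid of a reduced product: agreement on a set in the filter. -/
def redSetoid {I : Type*} (Φ : Filter I) (X : I → Type*) : Setoid (∀ i, X i) where
  r x y := {i | x i = y i} ∈ Φ
  iseqv := by
    refine ⟨fun x => ?_, fun h => ?_, fun h1 h2 => ?_⟩
    · simpa using Filter.univ_mem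
    · filter_upwards [h] with i e using e.symm
    · filter_upwards [h1, h2] with i e1 e2 using e1.trans e2

/-- The relation of the reduced product. -/
def redRel {I : Type*} (Φ : Filter I) {X : I → Type*} (ρ : ∀ i, X i → X i → Prop) :
    Quotient (redSetoid Φ X) → Quotient (redSetoid Φ X) → Prop :=
  Quotient.lift₂ (fun x y => {i | ρ i (x i) (y i)} ∈ Φ)
    (by
      intro a b a' b' ha hb
      have ha' : {i | a i = a' i} ∈ Φ := ha
      have hb' : {i | b i = b' i} ∈ Φ := hb
      apply propext
      constructor
      · intro h
        filter_upwards [h, ha', hb'] with i h1 h2 h3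
        rw [← h2, ← h3]; exact h1
      · intro h
        filter_upwards [h, ha', hb'] with i h1 h2 h3
        rw [h2, h3]; exact h1)

/-- The coordinatewise relation of the direct product. -/
def dirRel {I : Type*} {X : I → Type*} (ρ : ∀ i, X i → X i → Prop) :
    (∀ i, X i) → (∀ i, X i) → Prop := fun x y => ∀ i, ρ i (x i) (y i)

/-- A non-principal ultrafilter contains no singleton. -/
def NonPrincipal {I : Type*} (U : Ultrafilter I) : Prop := ∀ a : I, {a} ∉ U

/-- An `ω`-complete (countably complete) ultrafilter. -/
def OmegaComplete {I : Type*} (U : Ultrafilter I) : Prop :=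
  ∀ f : ℕ → Set I, (∀ n, f n ∈ U) → (⋂ n, f n) ∈ U

/-- `|I|` is less than the first measurable cardinal: no subset of `I` carries a
non-principal `ω`-complete ultrafilter. -/
def NoMeasurableLE (I : Type*) : Prop :=
  ∀ J : Set I, ∀ U : Ultrafilter J, ¬ (NonPrincipal U ∧ OmegaComplete U)

/-- The linear graph on `ω`. -/
def linRel : ℕ → ℕ → Prop := fun m n => Nat.dist m n = 1

lemma pathPts_comp {X Y : Type*} (f : X → Y) {n : ℕ} (x y : X) (z : Fin n → X) :
    pathPts (f x) (f y) (f ∘ z) = f ∘ pathPts x y z := by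
  simp [pathPts, Fin.comp_cons, Fin.comp_snoc]

lemma pathPts_last {X : Type*} {m : ℕ} (x y : X) (z : Fin m → X) :
    pathPts x y z (Fin.last (m+1)) = y := by
  rw [pathPts, ← Fin.succ_last, Fin.cons_succ, Fin.snoc_last]

lemma pathPts_snoc_castSucc {X : Type*} {m : ℕ} (x y : X) (z : Fin m → X) (j : Fin (m+2)) :
    pathPts x y (Fin.snoc z y) j.castSucc = pathPts x y z j := by
  induction j using Fin.cases with
  | zero => simp [pathPts]
  | succ l =>
    rw [← Fin.succ_castSucc]
    simp [pathPts]

lemma IsPath.extend {X : Type*} {ρ : X → X → Prop} {m : ℕ} {z : Fin m → X}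
    {ε : Fin (m+1) → Bool} {x y : X} (h : IsPath ρ z ε x y) :
    IsPath ρ (Fin.snoc z y) (Fin.snoc ε false) x y := by
  intro k
  induction k using Fin.lastCases with
  | last =>
    rw [Fin.snoc_last, Fin.succ_last]
    rw [pathPts_snoc_castSucc, pathPts_last, pathPts_last]
    exact Or.inr rfl
  | cast j =>
    rw [Fin.snoc_castSucc, Fin.succ_castSucc, pathPts_snoc_castSucc, pathPts_snoc_castSucc]
    exact h j

lemma pad {X : Type*} {ρ : X → X → Prop} {x y : X} {m n : ℕ} (hmn : m ≤ n)
    (h : ∃ z : Fin m → X, ∃ ε : Fin (m+1) → Bool, IsPath ρ z ε x y) :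
    ∃ z : Fin n → X, ∃ ε : Fin (n+1) → Bool, IsPath ρ z ε x y := by
  induction n, hmn using Nat.le_induction with
  | base => exact h
  | succ n _ ih =>
    obtain ⟨z, ε, hp⟩ := ih
    exact ⟨_, _, hp.extend⟩

section Red
variable {I X : Type*} (U : Ultrafilter I) (ρ : X → X → Prop)

lemma rRefl_redRel_iff (A B : I → X) :
    rRefl (redRel (U : Filter I) (fun _ : I => ρ))
      (Quotient.mk _ A) (Quotient.mk _ B) ↔ {i | rRefl ρ (A i) (B i)} ∈ U := by
  constructor
  · rintro (h | h)
    · exact Filter.mem_of_superset h (fun i hi => Or.inl hi)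
    · exact Filter.mem_of_superset (Quotient.exact h) (fun i hi => Or.inr hi)
  · intro h
    rcases Ultrafilter.em U {i | ρ (A i) (B i)} with h1 | h1
    · exact Or.inl h1
    · refine Or.inr (Quotient.sound ?_)
      have h2 : {i | rRefl ρ (A i) (B i)} ∩ {i | ρ (A i) (B i)}ᶜ ∈ U :=
        Filter.inter_mem h h1
      refine Filter.mem_of_superset h2 ?_
      rintro i ⟨(hi|hi), hni⟩
      · exact absurd hi hni
      · exact hi

lemma rStep_redRel_iff (e : Bool) (A B : I → X) :
    rStep (redRel (U : Filter I) (fun _ : I => ρ)) e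
      (Quotient.mk _ A) (Quotient.mk _ B) ↔ {i | rStep ρ e (A i) (B i)} ∈ U := by
  cases e <;> simp [rStep, rRefl_redRel_iff]

end Red

lemma conn_of_diam {I X : Type*} (U : Ultrafilter I) (ρ : X → X → Prop)
    (h : ∃ n, ∀ a b : X, dLE ρ n a b) :
    Conn (redRel (U : Filter I) (fun _ : I => ρ)) := by
  obtain ⟨n, hn⟩ := h
  intro P Q
  induction P using Quotient.inductionOn with | _ x => ?_
  induction Q using Quotient.inductionOn with | _ y => ?_
  refine ⟨n, n, le_rfl, ?_⟩
  have hex : ∀ i, ∃ z : Fin n → X, ∃ ε : Fin (n+1) → Bool, IsPath ρ z ε (x i) (y i) := by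
    intro i
    obtain ⟨m, hm, z, ε, hp⟩ := hn (x i) (y i)
    exact pad hm ⟨z, ε, hp⟩
  choose zf εf hpf using hex
  set w : Fin n → (I → X) := fun j i => zf i j with hw
  classical
  set ε : Fin (n+1) → Bool := fun k => if {i | εf i k = true} ∈ U then true else false with hε
  have hA : ∀ k, {i | εf i k = ε k} ∈ U := by
    intro k
    by_cases hk : {i | εf i k = true} ∈ U
    · simp only [hε, if_pos hk]; exact hk
    · have h2 : {i | εf i k = true}ᶜ ∈ U := (Ultrafilter.em U _).resolve_left hk
      simp only [hε, if_neg hk]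
      refine Filter.mem_of_superset h2 ?_
      intro i hi
      simpa [Bool.not_eq_true] using hi
  have hpt : ∀ (j : Fin (n+2)) i, pathPts x y w j i = pathPts (x i) (y i) (zf i) j := by
    intro j i
    exact (congrFun (pathPts_comp (fun g : I → X => g i) x y w) j).symm
  refine ⟨fun j => Quotient.mk _ (w j), ε, ?_⟩
  intro k
  have hcomp := pathPts_comp (Quotient.mk (redSetoid (U : Filter I) fun _ : I => X)) x y w
  show rStep _ (ε k) (pathPts _ _ (Quotient.mk _ ∘ w) k.castSucc)
    (pathPts _ _ (Quotient.mk _ ∘ w) k.succ)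
  rw [hcomp]
  refine (rStep_redRel_iff U ρ (ε k) _ _).mpr ?_
  filter_upwards [hA k] with i hi
  show rStep ρ (ε k) (pathPts x y w k.castSucc i) (pathPts x y w k.succ i)
  rw [hpt, hpt, ← hi]
  exact hpf i k

lemma not_omegaComplete {I : Type*} (U : Ultrafilter I) (hU : NonPrincipal U)
    (hNM : NoMeasurableLE I) : ¬ OmegaComplete U := by
  intro hOC
  set e : I ≃ (Set.univ : Set I) := (Equiv.Set.univ I).symm with he
  set U' : Ultrafilter (Set.univ : Set I) := U.map e with hU'
  refine hNM Set.univ U' ⟨?_, ?_⟩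
  · intro a ha
    have h1 : e ⁻¹' {a} ∈ U := Ultrafilter.mem_map.mp ha
    have h2 : e ⁻¹' {a} = {e.symm a} := by
      ext i; simp [Equiv.eq_symm_apply, eq_comm]
    exact hU (e.symm a) (h2 ▸ h1)
  · intro g hg
    have h1 : ∀ n, e ⁻¹' (g n) ∈ U := fun n => Ultrafilter.mem_map.mp (hg n)
    have h2 := hOC (fun n => e ⁻¹' (g n)) h1
    refine Ultrafilter.mem_map.mpr ?_
    rw [Set.preimage_iInter]
    exact h2

lemma exists_unbounded {I : Type*} (U : Ultrafilter I) (h : ¬ OmegaComplete U) :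
    ∃ f : I → ℕ, ∀ n, {i | n ≤ f i} ∈ U := by
  simp only [OmegaComplete, not_forall] at h
  obtain ⟨A, hA, hIA⟩ := h
  classical
  set B : ℕ → Set I := fun n => ⋂ k ≤ n, A k with hB
  have hBU : ∀ n, B n ∈ U :=
    fun n => (Filter.biInter_mem (Set.finite_le_nat n)).mpr (fun k _ => hA k)
  have hc : (⋂ n, A n)ᶜ ∈ U := (Ultrafilter.em U _).resolve_left hIA
  refine ⟨fun i => if h : ∃ n, i ∉ B n then Nat.find h else 0, ?_⟩
  intro n
  have hmem : B n ∩ (⋂ m, A m)ᶜ ∈ U := Filter.inter_mem (hBU n) hc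
  refine Filter.mem_of_superset hmem ?_
  rintro i ⟨hi1, hi2⟩
  have hex : ∃ m, i ∉ B m := by
    simp only [Set.mem_compl_iff, Set.mem_iInter, not_forall] at hi2
    obtain ⟨m, hm⟩ := hi2
    exact ⟨m, fun hBm => hm (Set.mem_iInter₂.mp hBm m le_rfl)⟩
  show n ≤ if h : ∃ n, i ∉ B n then Nat.find h else 0
  rw [dif_pos hex]
  rw [Nat.le_find_iff]
  intro m hm hBm
  exact hBm (Set.mem_iInter₂.mpr (fun k hk => Set.mem_iInter₂.mp hi1 k (hk.trans hm.le)))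

lemma diam_of_conn {I X : Type*} (U : Ultrafilter I) (ρ : X → X → Prop)
    (f : I → ℕ) (hf : ∀ n, {i | n ≤ f i} ∈ U)
    (hC : Conn (redRel (U : Filter I) (fun _ : I => ρ))) :
    ∃ n, ∀ a b : X, dLE ρ n a b := by
  by_contra hnot
  push_neg at hnot
  choose a b hab using hnot
  set x : I → X := fun i => a (f i) with hx
  set y : I → X := fun i => b (f i) with hy
  obtain ⟨n, m, hmn, z, ε, hp⟩ := hC (Quotient.mk _ x) (Quotient.mk _ y)
  set w : Fin m → (I → X) := fun j => (z j).out with hwdef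
  have hz : z = Quotient.mk _ ∘ w := funext (fun j => (Quotient.out_eq (z j)).symm)
  rw [hz] at hp
  have hsteps : ∀ k : Fin (m+1),
      {i | rStep ρ (ε k) (pathPts x y w k.castSucc i) (pathPts x y w k.succ i)} ∈ U := by
    intro k
    have hk := hp k
    rw [pathPts_comp (Quotient.mk _) x y w] at hk
    exact (rStep_redRel_iff U ρ (ε k) _ _).mp hk
  have hS : (⋂ k : Fin (m+1),
      {i | rStep ρ (ε k) (pathPts x y w k.castSucc i) (pathPts x y w k.succ i)}) ∈ U :=
    Filter.iInter_mem.mpr hsteps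
  have h2 := Filter.inter_mem hS (hf m)
  obtain ⟨i, hi1, hi2⟩ := Ultrafilter.nonempty_of_mem h2
  have hpath : IsPath ρ (fun j => w j i) ε (x i) (y i) := by
    intro k
    have hk := Set.mem_iInter.mp hi1 k
    have hc := pathPts_comp (fun g : I → X => g i) x y w
    show rStep ρ (ε k) (pathPts (x i) (y i) ((fun g : I → X => g i) ∘ w) k.castSucc)
      (pathPts (x i) (y i) ((fun g : I → X => g i) ∘ w) k.succ)
    rw [hc]
    exact hk
  exact hab (f i) ⟨m, hi2, _, _, hpath⟩

theorem stmt_9 {X : Type*} [Nonempty X] (ρ : X → X → Prop) {I : Type*} [Infinite I]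
    (U : Ultrafilter I) (hU : NonPrincipal U) :
    (NoMeasurableLE I →
      (Conn (redRel (U : Filter I) (fun _ : I => ρ)) ↔ ∃ n, ∀ a b : X, dLE ρ n a b)) ∧
    ((∃ n, ∀ a b : X, dLE ρ n a b) → Conn (redRel (U : Filter I) (fun _ : I => ρ))) := by
  refine ⟨fun hNM => ⟨fun hC => ?_, conn_of_diam U ρ⟩, conn_of_diam U ρ⟩
  obtain ⟨f, hf⟩ := exists_unbounded U (not_omegaComplete U hU hNM)
  exact diam_of_conn U ρ f hf hC
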